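/- For each subset I of the ground set E of a matroid M with rank function r, the alternating sum Σ_{J⊆I} (−1)^{|I|−|J|} (r(E) − r(E−J)) equals the signed beta invariant β̃(M/(E−I)) of the contraction of M by the complement of I. -/

import Mathlib

open Finset
open scoped Classical

/-- The beta invariant `β(M) = (−1)^{r(G)} ∑_{X⊆G} (−1)^{|X|} ρ(X)`. -/
def betaInv {α : Type*} [DecidableEq α] (G : Finset α) (ρ : Finset α → ℕ) : ℤ :=
  (-1) ^ (ρ G) * ∑ X ∈ G.powerset, (-1) ^ X.card * (ρ X : ℤ)

/-- The signed beta invariant `β̃(M) = (−1)^{r(M)+1} β(M)`. -/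
def betaT {α : Type*} [DecidableEq α] (G : Finset α) (ρ : Finset α → ℕ) : ℤ :=
  (-1) ^ (ρ G + 1) * betaInv G ρ

/-- The rank function of the contraction `M/A`. -/
def contr {α : Type*} [DecidableEq α] (r : Finset α → ℕ) (A : Finset α) :
    Finset α → ℕ :=
  fun X => r (A ∪ X) - r A

/-- The computation in the proof of Theorem 2.6: for each `I ⊆ E`,
`∑_{J⊆I} (−1)^{|I|−|J|} (r(E) − r(E−J)) = β̃(M/(E−I))`, the contraction
`M/(E−I)` being a matroid on the ground set `I`. -/
theorem alternating_sum_eq_betaT {α : Type*} [DecidableEq α]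
    (E : Finset α) (r : Finset α → ℕ)
    (hcard : ∀ A, r A ≤ A.card)
    (hmono : ∀ A B, A ⊆ B → r A ≤ r B)
    (hsub : ∀ A B, r (A ∪ B) + r (A ∩ B) ≤ r A + r B)
    (hE : ∀ A, r (A ∩ E) = r A)
    (I : Finset α) (hI : I ⊆ E) :
    ∑ J ∈ I.powerset, (-1 : ℤ) ^ (I.card - J.card) * ((r E : ℤ) - (r (E \ J) : ℤ))
      = betaT I (contr r (E \ I)) := by
  classical
  have hEI : E \ I ∪ I = E := Finset.sdiff_union_of_subset hI
  have hmono' : ∀ X : Finset α, r (E \ I) ≤ r (E \ I ∪ X) :=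
    fun X => hmono _ _ Finset.subset_union_left
  -- rewrite RHS
  have hRHS : betaT I (contr r (E \ I)) =
      ∑ X ∈ I.powerset, (-1:ℤ) ^ X.card * ((r (E \ I) : ℤ) - (r (E \ I ∪ X) : ℤ)) := by
    unfold betaT betaInv contr
    rw [← mul_assoc, ← pow_add]
    have hodd : ((-1:ℤ)) ^ ((r (E \ I ∪ I) - r (E \ I)) + 1 + (r (E \ I ∪ I) - r (E \ I))) = -1 :=
      Odd.neg_one_pow ⟨r (E \ I ∪ I) - r (E \ I), by ring⟩
    rw [hodd]
    simp only [neg_one_mul, ← Finset.sum_neg_distrib]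
    refine Finset.sum_congr rfl fun X hX => ?_
    rw [Nat.cast_sub (hmono' X)]
    ring
  rw [hRHS]
  -- reindex LHS via J ↦ I \ J
  have hLHS : ∑ J ∈ I.powerset, (-1 : ℤ) ^ (I.card - J.card) * ((r E : ℤ) - (r (E \ J) : ℤ))
      = ∑ X ∈ I.powerset, (-1:ℤ) ^ X.card * ((r E : ℤ) - (r (E \ I ∪ X) : ℤ)) := by
    refine Finset.sum_nbij' (fun J => I \ J) (fun X => I \ X) ?_ ?_ ?_ ?_ ?_
    · intro J hJ; exact Finset.mem_powerset.mpr (Finset.sdiff_subset)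
    · intro X hX; exact Finset.mem_powerset.mpr (Finset.sdiff_subset)
    · intro J hJ; exact Finset.sdiff_sdiff_eq_self (Finset.mem_powerset.mp hJ)
    · intro X hX; exact Finset.sdiff_sdiff_eq_self (Finset.mem_powerset.mp hX)
    · intro J hJ
      have hJI := Finset.mem_powerset.mp hJ
      rw [Finset.card_sdiff_of_subset hJI]
      congr 2
      rw [Finset.sdiff_union_sdiff_cancel ?_ hJI]
      · exact hI
  rw [hLHS, ← sub_eq_zero, ← Finset.sum_sub_distrib]
  have : ∀ X ∈ I.powerset, (-1:ℤ) ^ X.card * ((r E : ℤ) - (r (E \ I ∪ X) : ℤ))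
      - (-1:ℤ) ^ X.card * ((r (E \ I) : ℤ) - (r (E \ I ∪ X) : ℤ))
      = ((r E : ℤ) - (r (E \ I) : ℤ)) * (-1:ℤ) ^ X.card := fun X hX => by ring
  rw [Finset.sum_congr rfl this, ← Finset.mul_sum,
    Finset.sum_powerset_neg_one_pow_card]
  by_cases h : I = ∅
  · subst h
    simp
  · simp [h]
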